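/- The map t ↦ t̃ sending each finite binary tree to its associated snake is injective. -/

import Mathlib

inductive BTree | bot | node (l r : BTree)

def Snake (x : List ℕ) : Prop :=
  x = [0] ∨
    (x ≠ [] ∧ x.head? = some 2 ∧ x.getLast? = some 0 ∧
      (∀ i, i + 1 < x.length → 0 < x[i]!) ∧
      (∀ i, i + 1 < x.length → x[i + 1]! = x[i]! + 1 ∨ x[i]! = x[i + 1]! + 1))

def oplus (x y : List ℕ) : List ℕ := 2 :: (x.map (· + 1) ++ y)

def tilde : BTree → List ℕ
  | .bot => [0]
  | .node l r => oplus (tilde l) (tilde r)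

lemma tilde_ne_nil (t : BTree) : tilde t ≠ [] := by
  cases t <;> simp [tilde, oplus]

lemma tilde_zero_mem (t : BTree) : 0 ∈ tilde t := by
  induction t with
  | bot => simp [tilde]
  | node l r ihl ihr =>
    simp only [tilde, oplus]
    exact List.mem_cons_of_mem _ (List.mem_append_right _ ihr)

lemma tilde_dropLast_pos (t : BTree) : ∀ x ∈ (tilde t).dropLast, 0 < x := by
  induction t with
  | bot => simp [tilde]
  | node l r ihl ihr =>
    intro x hx
    simp only [tilde, oplus] at hx
    rw [List.dropLast_cons_of_ne_nil (by simp [tilde_ne_nil r]),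
      List.dropLast_append_of_ne_nil (tilde_ne_nil r)] at hx
    rcases List.mem_cons.mp hx with rfl | hx
    · omega
    · rcases List.mem_append.mp hx with hx | hx
      · obtain ⟨y, _, rfl⟩ := List.mem_map.mp hx; omega
      · exact ihr x hx

lemma tilde_prefix_eq {a b : BTree} (h : tilde a <+: tilde b) : tilde a = tilde b := by
  obtain ⟨s, hs⟩ := h
  rcases eq_or_ne s [] with rfl | hne
  · simpa using hs
  · exfalso
    have h0 : (0 : ℕ) ∈ (tilde b).dropLast := by
      rw [← hs, List.dropLast_append_of_ne_nil hne]
      exact List.mem_append_left _ (tilde_zero_mem a)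
    exact absurd (tilde_dropLast_pos b 0 h0) (by omega)

lemma map_prefix_eq {a b : BTree}
    (h : (tilde a).map (· + 1) <+: (tilde b).map (· + 1)) : tilde a = tilde b := by
  apply tilde_prefix_eq
  obtain ⟨s, hs⟩ := h
  have hlen : (tilde a).length ≤ (tilde b).length := by
    have := congrArg List.length hs; simp at this; omega
  have : tilde a <+: tilde b := by
    have h1 : (tilde a).map (· + 1) = ((tilde b).take (tilde a).length).map (· + 1) := by
      rw [List.map_take, ← hs, List.take_left' (by simp)]
    have h2 : tilde a = (tilde b).take (tilde a).length :=
      List.map_injective_iff.mpr (fun x y => by omega) h1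
    rw [h2]; exact List.take_prefix _ _
  exact this

theorem tilde_injective : Function.Injective tilde := by
  intro t1 t2 h
  induction t1 generalizing t2 with
  | bot =>
    cases t2 with
    | bot => rfl
    | node l r => simp [tilde, oplus] at h
  | node l1 r1 ihl ihr =>
    cases t2 with
    | bot => simp [tilde, oplus] at h
    | node l2 r2 =>
      simp only [tilde, oplus, List.cons.injEq, true_and] at h
      have hp1 : (tilde l1).map (· + 1) <+: (tilde l1).map (· + 1) ++ tilde r1 :=
        List.prefix_append _ _
      have hp2 : (tilde l2).map (· + 1) <+: (tilde l1).map (· + 1) ++ tilde r1 := by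
        rw [h]; exact List.prefix_append _ _
      have hl : tilde l1 = tilde l2 := by
        rcases le_total ((tilde l1).map (· + 1)).length ((tilde l2).map (· + 1)).length with
          hle | hle
        · exact map_prefix_eq (List.prefix_of_prefix_length_le hp1 hp2 hle)
        · exact (map_prefix_eq (List.prefix_of_prefix_length_le hp2 hp1 hle)).symm
      have hr : tilde r1 = tilde r2 := by
        rw [hl] at h
        exact List.append_cancel_left h
      rw [ihl hl, ihr hr]
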